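/- (Theorem 6: necessary condition for the DR bias component to be smaller than that of the normalized IPW estimator.) Let W, M, M* be integrable real random variables with W·M and W·M* integrable and E[W] > 0, and write cov[W,M] = E[W·M] − E[W]·E[M]. If |E[(W − 1)·(M − M*)]| < |E[W·M]/E[W] − E[M]|, then E[(W − 1)·M] − |cov[W, M]|/E[W] < E[(W − 1)·M*] < E[(W − 1)·M] + |cov[W, M]|/E[W]. -/

import Mathlib

open MeasureTheory

/-- Theorem 6: necessary condition for the first bias component of the DR estimator to be
smaller than that of the normalized IPW estimator: if `E[W] > 0` and
`|E[(W − 1)·(M − M*)]| < |E[W·M]/E[W] − E[M]|`, then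
`E[(W − 1)·M] − |cov[W, M]|/E[W] < E[(W − 1)·M*] < E[(W − 1)·M] + |cov[W, M]|/E[W]`. -/
theorem dr_vs_ipw2_necessary
    {Ω : Type*} [MeasurableSpace Ω] (μ : Measure Ω) [IsProbabilityMeasure μ]
    (W M Mstar : Ω → ℝ) (hW : Integrable W μ) (hM : Integrable M μ)
    (hMstar : Integrable Mstar μ)
    (hWM : Integrable (fun ω => W ω * M ω) μ)
    (hWMstar : Integrable (fun ω => W ω * Mstar ω) μ)
    (hEW : 0 < ∫ ω, W ω ∂μ)
    (hlt : |∫ ω, (W ω - 1) * (M ω - Mstar ω) ∂μ|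
      < |(∫ ω, W ω * M ω ∂μ) / (∫ ω, W ω ∂μ) - ∫ ω, M ω ∂μ|) :
    (∫ ω, (W ω - 1) * M ω ∂μ)
        - |(∫ ω, W ω * M ω ∂μ) - (∫ ω, W ω ∂μ) * ∫ ω, M ω ∂μ| / (∫ ω, W ω ∂μ)
      < (∫ ω, (W ω - 1) * Mstar ω ∂μ) ∧
    (∫ ω, (W ω - 1) * Mstar ω ∂μ)
      < (∫ ω, (W ω - 1) * M ω ∂μ)
        + |(∫ ω, W ω * M ω ∂μ) - (∫ ω, W ω ∂μ) * ∫ ω, M ω ∂μ| / (∫ ω, W ω ∂μ) := by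
  have h1 : Integrable (fun ω => (W ω - 1) * M ω) μ := by
    simpa [sub_mul, one_mul, Pi.sub_def] using hWM.sub hM
  have h2 : Integrable (fun ω => (W ω - 1) * Mstar ω) μ := by
    simpa [sub_mul, one_mul, Pi.sub_def] using hWMstar.sub hMstar
  have key : (∫ ω, (W ω - 1) * (M ω - Mstar ω) ∂μ)
      = (∫ ω, (W ω - 1) * M ω ∂μ) - ∫ ω, (W ω - 1) * Mstar ω ∂μ := by
    rw [← integral_sub h1 h2]; congr 1; funext ω; ring
  have hEW' : (∫ ω, W ω ∂μ) ≠ 0 := ne_of_gt hEW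
  have hr : |(∫ ω, W ω * M ω ∂μ) / (∫ ω, W ω ∂μ) - ∫ ω, M ω ∂μ|
      = |(∫ ω, W ω * M ω ∂μ) - (∫ ω, W ω ∂μ) * ∫ ω, M ω ∂μ| / (∫ ω, W ω ∂μ) := by
    rw [div_sub' hEW', abs_div, abs_of_pos hEW]
  rw [key, hr] at hlt
  have := abs_lt.mp hlt
  constructor <;> linarith [this.1, this.2]
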